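/- Let (a_0, a_1, a_2, a_3, a_4; d_1, d_2) be a del Pezzo WCI datum with pairwise distinct weights (a_0 < a_1 < a_2 < a_3 < a_4) such that d_1 = a_0 + a_4, d_2 = a_1 + a_4, a_4 = 2a_3 − a_1 and 2a_3 = 2a_2 + a_1 − a_0. Then one of the following holds for some positive integer ν: (i) there are odd coprime positive integers b_0 < b_1 with a_0 = 2b_0, a_1 = 2b_1, ν even, a_2 = (νb_0 − 1)b_1, a_3 = (νb_1 − 1)b_0, a_4 = 2(νb_0b_1 − b_0 − b_1); (ii) a_0, a_1 are odd and coprime, ν is odd, a_2 = ((νa_0 − 1)/2)a_1, a_3 = ((νa_1 − 1)/2)a_0, a_4 = νa_0a_1 − a_0 − a_1; (iii) a_0, a_1 are odd and coprime, a_2 = (νa_0 − 1)a_1, a_3 = νa_0a_1 − (a_0 + a_1)/2, a_4 = 2νa_0a_1 − a_0 − 2a_1; (iv) a_0, a_1 are odd and coprime, a_2 = (νa_0 − 1)a_1 + (a_1 − a_0)/2, a_3 = a_0(νa_1 − 1), a_4 = 2νa_0a_1 − 2a_0 − a_1; (v) a_0, a_1 are odd and coprime, ν is odd, a_2 = ((νa_1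 − 1)/2)a_0 − a_1, a_3 = ((νa_0 − 1)/2)a_1 − a_0, a_4 = νa_0a_1 − 2(a_0 + a_1). -/

import Mathlib

/-- `x` lies in the additive monoid `⟨b, c⟩` of non-negative integer combinations of `b` and `c`,
with membership taken in `ℤ`. -/
def InSpan2 (b c x : ℤ) : Prop := ∃ α β : ℕ, x = α * b + β * c

/-- `x` lies in the additive monoid `⟨b, c, d⟩` of non-negative integer combinations,
with membership taken in `ℤ`. -/
def InSpan3 (b c d x : ℤ) : Prop := ∃ α β γ : ℕ, x = α * b + β * c + γ * d

/-- A *del Pezzo WCI datum*: Iano-Fletcher's arithmetic criteria for the general codimension-2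
weighted complete intersection of multidegree `(d₁, d₂)` in `P(a 0, …, a 4)` to be a well-formed
quasi-smooth del Pezzo surface which is not an intersection with a linear cone. -/
structure IsDelPezzoWCI (a : Fin 5 → ℤ) (d₁ d₂ : ℤ) : Prop where
  a_pos : ∀ i, 0 < a i
  d₁_pos : 0 < d₁
  d₂_pos : 0 < d₂
  mono : ∀ i j : Fin 5, i ≤ j → a i ≤ a j
  d_le : d₁ ≤ d₂
  lc : ∀ i, d₁ ≠ a i ∧ d₂ ≠ a i
  wf1 : ∀ s : Finset (Fin 5), s.card = 3 → (sᶜ.gcd a ∣ d₁ ∨ sᶜ.gcd a ∣ d₂)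
  wf2 : ∀ s : Finset (Fin 5), s.card = 2 → (sᶜ.gcd a ∣ d₁ ∧ sᶜ.gcd a ∣ d₂)
  wf3 : ∀ i : Fin 5, ({i} : Finset (Fin 5))ᶜ.gcd a = 1
  qs1 : ∀ i, a i ∣ d₁ ∨ a i ∣ d₂ ∨
    ∃ e f : Fin 5, e ≠ f ∧ a i ∣ (d₁ - a e) ∧ a i ∣ (d₂ - a f)
  qs2 : ∀ i j : Fin 5, i ≠ j →
    (InSpan2 (a i) (a j) d₁ ∧ InSpan2 (a i) (a j) d₂) ∨
    (InSpan2 (a i) (a j) d₁ ∧ ∃ e : Fin 5, InSpan2 (a i) (a j) (d₂ - a e)) ∨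
    (InSpan2 (a i) (a j) d₂ ∧ ∃ e : Fin 5, InSpan2 (a i) (a j) (d₁ - a e)) ∨
    (∃ E F : Finset (Fin 5), E.card = 2 ∧ F.card = 2 ∧
      E ∪ F = ({i, j} : Finset (Fin 5))ᶜ ∧
      (∀ e ∈ E, InSpan2 (a i) (a j) (d₁ - a e)) ∧
      (∀ f ∈ F, InSpan2 (a i) (a j) (d₂ - a f)))
  qs3 : ∀ k l m : Fin 5, k ≠ l → k ≠ m → l ≠ m →
    (InSpan3 (a k) (a l) (a m) d₁ ∧ InSpan3 (a k) (a l) (a m) d₂) ∨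
    (InSpan3 (a k) (a l) (a m) d₁ ∧
      ∀ i ∈ ({k, l, m} : Finset (Fin 5))ᶜ, InSpan3 (a k) (a l) (a m) (d₂ - a i)) ∨
    (InSpan3 (a k) (a l) (a m) d₂ ∧
      ∀ i ∈ ({k, l, m} : Finset (Fin 5))ᶜ, InSpan3 (a k) (a l) (a m) (d₁ - a i))
  amp : 1 ≤ a 0 + a 1 + a 2 + a 3 + a 4 - d₁ - d₂

private lemma odd_dvd_two_mul' {q m : ℤ} (hq : Odd q) (h : q ∣ 2 * m) : q ∣ m := by
  obtain ⟨k, hk⟩ := h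
  rcases Int.even_or_odd k with ⟨k', hk'⟩ | ho
  · refine ⟨k', ?_⟩
    have h2 : 2 * m = 2 * (q * k') := by rw [hk, hk']; ring
    linarith
  · exfalso
    have h1 : Odd (q * k) := Int.odd_mul.mpr ⟨hq, ho⟩
    have h2 : Even (q * k) := ⟨m, by linarith⟩
    exact (Int.not_odd_iff_even.mpr h2) h1

private lemma quot_pos {A t X : ℤ} (hA : 0 < A) (hX : 0 < X) (h : X = A * t) : 0 < t := by
  nlinarith

private lemma quot_odd {p q t X : ℤ} (hX : Odd X) (h : X = p * q * t) : Odd t := by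
  rcases Int.even_or_odd t with ⟨u, hu⟩ | ho
  · exact absurd hX (Int.not_odd_iff_even.mpr ⟨p * q * u, by rw [h, hu]; ring⟩)
  · exact ho

private lemma quot_even {p q t X : ℤ} (hp : Odd p) (hq : Odd q) (hX : Even X)
    (h : X = p * q * t) : Even t := by
  rcases Int.even_or_odd t with he | ho
  · exact he
  · exfalso
    have hodd : Odd (p * q * t) := Int.odd_mul.mpr ⟨Int.odd_mul.mpr ⟨hp, hq⟩, ho⟩
    rw [← h] at hodd
    obtain ⟨c, hc⟩ := hodd
    obtain ⟨e, he⟩ := hX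
    omega

private lemma spanQ' {p q m n r : ℤ} (hp : 0 < p) (hpq : p < q) (hqm : q < m)
    (hmn : m < n) (hnr : n < r) (hr : r = 2*m - p)
    (H : (∃ α β γ : ℕ, 2*m = α*q + β*n + γ*r) ∨ (∃ α β γ : ℕ, m = α*q + β*n + γ*r)) :
    q ∣ 2*m ∨ q ∣ 2*m - n := by
  rcases H with ⟨α, β, γ, hE⟩ | ⟨α, β, γ, hE⟩
  · have h0α : (0:ℤ) ≤ (α:ℤ) * q := mul_nonneg (Int.natCast_nonneg _) (by linarith)
    have h0β : (0:ℤ) ≤ (β:ℤ) * n := mul_nonneg (Int.natCast_nonneg _) (by linarith)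
    have hγ2 : γ < 2 := by
      by_contra hc
      push_neg at hc
      have h2 : (2:ℤ) ≤ (γ:ℤ) := by exact_mod_cast hc
      nlinarith
    interval_cases γ
    · have hβ2 : β < 2 := by
        by_contra hc
        push_neg at hc
        have h2 : (2:ℤ) ≤ (β:ℤ) := by exact_mod_cast hc
        push_cast at hE
        nlinarith
      interval_cases β
      · left; exact ⟨α, by push_cast at hE; linarith⟩
      · right; exact ⟨α, by push_cast at hE; linarith⟩
    · exfalso
      push_cast at hE
      have hα0 : α = 0 := by
        by_contra hc
        have h1 : (1:ℤ) ≤ (α:ℤ) := by exact_mod_cast Nat.one_le_iff_ne_zero.mpr hc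
        nlinarith
      have hβ0 : β = 0 := by
        by_contra hc
        have h1 : (1:ℤ) ≤ (β:ℤ) := by exact_mod_cast Nat.one_le_iff_ne_zero.mpr hc
        nlinarith
      subst hα0; subst hβ0
      push_cast at hE
      linarith
  · have h0α : (0:ℤ) ≤ (α:ℤ) * q := mul_nonneg (Int.natCast_nonneg _) (by linarith)
    have hβ0 : β = 0 := by
      by_contra hc
      have h1 : (1:ℤ) ≤ (β:ℤ) := by exact_mod_cast Nat.one_le_iff_ne_zero.mpr hc
      have h0γ : (0:ℤ) ≤ (γ:ℤ) * r := mul_nonneg (Int.natCast_nonneg _) (by linarith)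
      nlinarith
    have hγ0 : γ = 0 := by
      by_contra hc
      have h1 : (1:ℤ) ≤ (γ:ℤ) := by exact_mod_cast Nat.one_le_iff_ne_zero.mpr hc
      have h0β : (0:ℤ) ≤ (β:ℤ) * n := mul_nonneg (Int.natCast_nonneg _) (by linarith)
      nlinarith
    subst hβ0; subst hγ0
    push_cast at hE
    left
    exact ⟨2 * α, by push_cast; linarith⟩

private lemma spanP' {p q m n r : ℤ} (hp : 0 < p) (hpq : p < q) (hqm : q < m)
    (hmn : m < n) (hnr : n < r) (hr : r = 2*m - p) (h2n : 2*n = 2*m + q - p)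
    (H : (∃ α β γ : ℕ, n = α*p + β*m + γ*r) ∨ (∃ α β γ : ℕ, 2*n = α*p + β*m + γ*r)) :
    p ∣ q ∨ p ∣ n ∨ p ∣ 2*n ∨ p ∣ 2*n - m := by
  rcases H with ⟨α, β, γ, hE⟩ | ⟨α, β, γ, hE⟩
  · have h0α : (0:ℤ) ≤ (α:ℤ) * p := mul_nonneg (Int.natCast_nonneg _) (by linarith)
    have h0β : (0:ℤ) ≤ (β:ℤ) * m := mul_nonneg (Int.natCast_nonneg _) (by linarith)
    have hγ0 : γ = 0 := by
      by_contra hc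
      have h1 : (1:ℤ) ≤ (γ:ℤ) := by exact_mod_cast Nat.one_le_iff_ne_zero.mpr hc
      nlinarith
    subst hγ0
    push_cast at hE
    have hβ2 : β < 2 := by
      by_contra hc
      push_neg at hc
      have h2 : (2:ℤ) ≤ (β:ℤ) := by exact_mod_cast hc
      nlinarith
    interval_cases β
    · right; left; exact ⟨α, by push_cast at hE ⊢; linarith⟩
    · left; exact ⟨2*α + 1, by push_cast at hE ⊢; linarith⟩
  · have h0α : (0:ℤ) ≤ (α:ℤ) * p := mul_nonneg (Int.natCast_nonneg _) (by linarith)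
    have h0β : (0:ℤ) ≤ (β:ℤ) * m := mul_nonneg (Int.natCast_nonneg _) (by linarith)
    have hγ2 : γ < 2 := by
      by_contra hc
      push_neg at hc
      have h2 : (2:ℤ) ≤ (γ:ℤ) := by exact_mod_cast hc
      nlinarith
    interval_cases γ
    · push_cast at hE
      have hβ3 : β < 3 := by
        by_contra hc
        push_neg at hc
        have h2 : (3:ℤ) ≤ (β:ℤ) := by exact_mod_cast hc
        nlinarith
      interval_cases β
      · right; right; left; exact ⟨α, by push_cast at hE ⊢; linarith⟩
      · right; right; right; exact ⟨α, by push_cast at hE ⊢; linarith⟩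
      · left; exact ⟨α + 1, by push_cast at hE ⊢; linarith⟩
    · push_cast at hE
      have hβ0 : β = 0 := by
        by_contra hc
        have h1 : (1:ℤ) ≤ (β:ℤ) := by exact_mod_cast Nat.one_le_iff_ne_zero.mpr hc
        nlinarith
      subst hβ0
      push_cast at hE
      left
      exact ⟨α, by linarith⟩

theorem case01_subcase2_series (a : Fin 5 → ℤ) (d₁ d₂ : ℤ) (h : IsDelPezzoWCI a d₁ d₂)
    (hdist : ∀ i j : Fin 5, i < j → a i < a j)
    (hd₁ : d₁ = a 0 + a 4) (hd₂ : d₂ = a 1 + a 4)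
    (h4 : a 4 = 2 * a 3 - a 1) (h3 : 2 * a 3 = 2 * a 2 + a 1 - a 0) :
    ∃ ν : ℤ, 0 < ν ∧
      ((∃ b₀ b₁ : ℤ, 0 < b₀ ∧ b₀ < b₁ ∧ Odd b₀ ∧ Odd b₁ ∧ Int.gcd b₀ b₁ = 1 ∧
        a 0 = 2 * b₀ ∧ a 1 = 2 * b₁ ∧ Even ν ∧
        a 2 = (ν * b₀ - 1) * b₁ ∧ a 3 = (ν * b₁ - 1) * b₀ ∧
        a 4 = 2 * (ν * b₀ * b₁ - b₀ - b₁)) ∨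
       (Odd (a 0) ∧ Odd (a 1) ∧ Int.gcd (a 0) (a 1) = 1 ∧ Odd ν ∧
        2 * a 2 = (ν * a 0 - 1) * a 1 ∧ 2 * a 3 = (ν * a 1 - 1) * a 0 ∧
        a 4 = ν * a 0 * a 1 - a 0 - a 1) ∨
       (Odd (a 0) ∧ Odd (a 1) ∧ Int.gcd (a 0) (a 1) = 1 ∧
        a 2 = (ν * a 0 - 1) * a 1 ∧ 2 * a 3 = 2 * ν * a 0 * a 1 - (a 0 + a 1) ∧
        a 4 = 2 * ν * a 0 * a 1 - a 0 - 2 * a 1) ∨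
       (Odd (a 0) ∧ Odd (a 1) ∧ Int.gcd (a 0) (a 1) = 1 ∧
        2 * a 2 = 2 * (ν * a 0 - 1) * a 1 + (a 1 - a 0) ∧ a 3 = a 0 * (ν * a 1 - 1) ∧
        a 4 = 2 * ν * a 0 * a 1 - 2 * a 0 - a 1) ∨
       (Odd (a 0) ∧ Odd (a 1) ∧ Int.gcd (a 0) (a 1) = 1 ∧ Odd ν ∧
        2 * a 2 = (ν * a 1 - 1) * a 0 - 2 * a 1 ∧ 2 * a 3 = (ν * a 0 - 1) * a 1 - 2 * a 0 ∧
        a 4 = ν * a 0 * a 1 - 2 * (a 0 + a 1))) := by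
  have hp : 0 < a 0 := h.a_pos 0
  have h01 : a 0 < a 1 := hdist 0 1 (by decide)
  have h12 : a 1 < a 2 := hdist 1 2 (by decide)
  have h23 : a 2 < a 3 := hdist 2 3 (by decide)
  have h34 : a 3 < a 4 := hdist 3 4 (by decide)
  have hr : a 4 = 2 * a 2 - a 0 := by linarith
  have hdm : d₁ = 2 * a 2 := by linarith
  have hdn : d₂ = 2 * a 3 := by linarith
  -- key unit lemmas from well-formedness
  have key3 : ∀ x : ℤ, x ∣ a 0 → x ∣ a 1 → x ∣ a 2 → IsUnit x := by
    intro x h0 h1 h2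
    have h4' : x ∣ a 4 := by rw [hr]; exact dvd_sub (h2.mul_left 2) h0
    have hx : x ∣ (({3} : Finset (Fin 5))ᶜ.gcd a) := by
      apply Finset.dvd_gcd
      intro i hi
      fin_cases i
      · exact h0
      · exact h1
      · exact h2
      · simp at hi
      · exact h4'
    rw [h.wf3 3] at hx
    exact isUnit_of_dvd_one hx
  have key2 : ∀ x : ℤ, x ∣ a 0 → x ∣ a 1 → x ∣ a 3 → IsUnit x := by
    intro x h0 h1 h2
    have h4' : x ∣ a 4 := by rw [h4]; exact dvd_sub (h2.mul_left 2) h1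
    have hx : x ∣ (({2} : Finset (Fin 5))ᶜ.gcd a) := by
      apply Finset.dvd_gcd
      intro i hi
      fin_cases i
      · exact h0
      · exact h1
      · simp at hi
      · exact h2
      · exact h4'
    rw [h.wf3 2] at hx
    exact isUnit_of_dvd_one hx
  -- extraction from qs3 for (1,3,4) and (0,2,4)
  have HQsrc : (∃ α β γ : ℕ, 2*(a 2) = α*(a 1) + β*(a 3) + γ*(a 4)) ∨
      (∃ α β γ : ℕ, a 2 = α*(a 1) + β*(a 3) + γ*(a 4)) := by
    rcases h.qs3 1 3 4 (by decide) (by decide) (by decide) with ⟨hh, -⟩ | ⟨hh, -⟩ | ⟨-, hh⟩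
    · left; obtain ⟨α, β, γ, e⟩ := hh; exact ⟨α, β, γ, by rw [← hdm]; exact e⟩
    · left; obtain ⟨α, β, γ, e⟩ := hh; exact ⟨α, β, γ, by rw [← hdm]; exact e⟩
    · right
      obtain ⟨α, β, γ, e⟩ := hh 2 (by decide)
      exact ⟨α, β, γ, by rw [hdm] at e; linarith⟩
  have HPsrc : (∃ α β γ : ℕ, a 3 = α*(a 0) + β*(a 2) + γ*(a 4)) ∨
      (∃ α β γ : ℕ, 2*(a 3) = α*(a 0) + β*(a 2) + γ*(a 4)) := by
    rcases h.qs3 0 2 4 (by decide) (by decide) (by decide) with ⟨-, hh⟩ | ⟨-, hh⟩ | ⟨hh, -⟩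
    · right; obtain ⟨α, β, γ, e⟩ := hh; exact ⟨α, β, γ, by rw [← hdn]; exact e⟩
    · left
      obtain ⟨α, β, γ, e⟩ := hh 3 (by decide)
      exact ⟨α, β, γ, by rw [hdn] at e; linarith⟩
    · right; obtain ⟨α, β, γ, e⟩ := hh; exact ⟨α, β, γ, by rw [← hdn]; exact e⟩
  have HQ : a 1 ∣ 2*(a 2) ∨ a 1 ∣ 2*(a 2) - a 3 :=
    spanQ' hp h01 h12 h23 h34 hr HQsrc
  have HP : a 0 ∣ a 1 ∨ a 0 ∣ a 3 ∨ a 0 ∣ 2*(a 3) ∨ a 0 ∣ 2*(a 3) - a 2 :=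
    spanP' hp h01 h12 h23 h34 hr h3 HPsrc
  -- gcd(a0, a1) divides 2
  have hgl : ((Int.gcd (a 0) (a 1) : ℤ)) ∣ a 0 := Int.gcd_dvd_left _ _
  have hgr : ((Int.gcd (a 0) (a 1) : ℤ)) ∣ a 1 := Int.gcd_dvd_right _ _
  have hwf1 := h.wf1 {2,3,4} (by decide)
  have hcompl : ({2,3,4} : Finset (Fin 5))ᶜ = {0,1} := by decide
  rw [hcompl] at hwf1
  have hgG : ((Int.gcd (a 0) (a 1) : ℤ)) ∣ Finset.gcd {0,1} a := by
    apply Finset.dvd_gcd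
    intro i hi
    fin_cases i
    · exact hgl
    · exact hgr
    · simp at hi
    · simp at hi
    · simp at hi
  have hg2m : ((Int.gcd (a 0) (a 1) : ℤ)) ∣ 2 * a 2 := by
    rcases hwf1 with hh | hh
    · rw [hdm] at hh; exact hgG.trans hh
    · rw [hdn] at hh
      have he : (2 * a 2 : ℤ) = 2 * a 3 - a 1 + a 0 := by linarith
      rw [he]
      exact dvd_add (dvd_sub (hgG.trans hh) hgr) hgl
  have hgdvd2 : ((Int.gcd (a 0) (a 1) : ℤ)) ∣ 2 := by
    have hw : IsUnit ((Int.gcd ((Int.gcd (a 0) (a 1) : ℤ)) (a 2) : ℤ)) := by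
      apply key3
      · exact (Int.gcd_dvd_left _ _).trans hgl
      · exact (Int.gcd_dvd_left _ _).trans hgr
      · exact Int.gcd_dvd_right _ _
    have hw1 : Int.gcd ((Int.gcd (a 0) (a 1) : ℤ)) (a 2) = 1 := by
      rcases Int.isUnit_iff.mp hw with hc | hc
      · exact_mod_cast hc
      · omega
    have hcop : IsCoprime ((Int.gcd (a 0) (a 1) : ℤ)) (a 2) :=
      Int.isCoprime_iff_gcd_eq_one.mpr hw1
    exact hcop.dvd_of_dvd_mul_right hg2m
  rcases Int.even_or_odd (a 0) with hev | hodd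
  · -- EVEN CASE: a0, a1 even, case (i)
    obtain ⟨b0, hb0⟩ := hev
    have hb1e : Even (a 1) := ⟨b0 + (a 3 - a 2), by linarith⟩
    obtain ⟨b1, hb1⟩ := hb1e
    have h2da0 : (2:ℤ) ∣ a 0 := ⟨b0, by linarith⟩
    have h2da1 : (2:ℤ) ∣ a 1 := ⟨b1, by linarith⟩
    have h2g : (2:ℤ) ∣ (Int.gcd (a 0) (a 1) : ℤ) := Int.dvd_coe_gcd h2da0 h2da1
    have hgeq2 : ((Int.gcd (a 0) (a 1) : ℤ)) = 2 :=
      Int.dvd_antisymm (Int.natCast_nonneg _) (by norm_num) hgdvd2 h2g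
    have hb0b1 : Int.gcd b0 b1 = 1 := by
      have e1 : Int.gcd (a 0) (a 1) = Int.gcd (2*b0) (2*b1) := by
        rw [show a 0 = 2*b0 by linarith, show a 1 = 2*b1 by linarith]
      rw [Int.gcd_mul_left] at e1
      have e2 : Int.gcd (a 0) (a 1) = 2 := by exact_mod_cast hgeq2
      norm_num at e1
      omega
    have hmodd : Odd (a 2) := by
      rcases Int.even_or_odd (a 2) with ⟨c, hc⟩ | ho
      · exfalso
        have hu := key3 2 h2da0 h2da1 ⟨c, by linarith⟩
        rcases Int.isUnit_iff.mp hu with hc2 | hc2 <;> norm_num at hc2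
      · exact ho
    have hnodd : Odd (a 3) := by
      rcases Int.even_or_odd (a 3) with ⟨c, hc⟩ | ho
      · exfalso
        have hu := key2 2 h2da0 h2da1 ⟨c, by linarith⟩
        rcases Int.isUnit_iff.mp hu with hc2 | hc2 <;> norm_num at hc2
      · exact ho
    have hb0pos : 0 < b0 := by linarith
    have hb1pos : 0 < b1 := by linarith
    have hb0odd : Odd b0 := by
      rcases Int.even_or_odd b0 with ⟨u, hu⟩ | ho
      · exfalso
        obtain ⟨s, hs⟩ := hnodd
        obtain ⟨t2, ht2⟩ := hmodd
        have hb1even : (2:ℤ) ∣ b1 := ⟨u + (s - t2), by omega⟩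
        have hd : (2:ℤ) ∣ (Int.gcd b0 b1 : ℤ) := Int.dvd_coe_gcd ⟨u, by omega⟩ hb1even
        rw [hb0b1] at hd
        norm_num at hd
      · exact ho
    have hb1odd : Odd b1 := by
      obtain ⟨u, hu⟩ := hb0odd
      obtain ⟨s, hs⟩ := hnodd
      obtain ⟨t2, ht2⟩ := hmodd
      exact ⟨u + s - t2, by omega⟩
    have hb1m : b1 ∣ a 2 := by
      rcases HQ with hq1 | hq2
      · obtain ⟨k, hk⟩ := hq1
        have e : a 1 * k = 2*(b1*k) := by rw [show a 1 = 2*b1 by linarith]; ring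
        exact ⟨k, by linarith⟩
      · exfalso
        obtain ⟨k, hk⟩ := hq2
        obtain ⟨s, hs⟩ := hnodd
        have e : a 1 * k = 2*(b1*k) := by rw [show a 1 = 2*b1 by linarith]; ring
        obtain ⟨K, hK⟩ : ∃ K:ℤ, 2*(a 2) - a 3 = 2*K := ⟨b1*k, by linarith⟩
        omega
    have hb0m : b0 ∣ a 2 + b1 := by
      rcases HP with hp1 | hp1 | hp1 | hp1
      · obtain ⟨k, hk⟩ := hp1
        have e : a 0 * k = 2*(b0*k) := by rw [show a 0 = 2*b0 by linarith]; ring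
        have hb0db1 : b0 ∣ b1 := ⟨k, by linarith⟩
        have hd : b0 ∣ (Int.gcd b0 b1 : ℤ) := Int.dvd_coe_gcd dvd_rfl hb0db1
        rw [hb0b1] at hd
        have hb01 : b0 = 1 := by
          rcases Int.isUnit_iff.mp (isUnit_of_dvd_one hd) with hc | hc
          · exact hc
          · omega
        rw [hb01]; exact one_dvd _
      · exfalso
        obtain ⟨k, hk⟩ := hp1
        obtain ⟨s, hs⟩ := hnodd
        have e : a 0 * k = 2*(b0*k) := by rw [show a 0 = 2*b0 by linarith]; ring
        obtain ⟨K, hK⟩ : ∃ K:ℤ, a 3 = 2*K := ⟨b0*k, by linarith⟩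
        omega
      · obtain ⟨k, hk⟩ := hp1
        have e : a 0 * k = 2*(b0*k) := by rw [show a 0 = 2*b0 by linarith]; ring
        have hb0a3 : b0 ∣ a 3 := ⟨k, by linarith⟩
        have he2 : a 2 + b1 = a 3 + b0 := by linarith
        rw [he2]; exact dvd_add hb0a3 dvd_rfl
      · exfalso
        obtain ⟨k, hk⟩ := hp1
        obtain ⟨t2, ht2⟩ := hmodd
        have e : a 0 * k = 2*(b0*k) := by rw [show a 0 = 2*b0 by linarith]; ring
        obtain ⟨K, hK⟩ : ∃ K:ℤ, 2*(a 3) - a 2 = 2*K := ⟨b0*k, by linarith⟩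
        omega
    have hcop01 : IsCoprime b0 b1 := Int.isCoprime_iff_gcd_eq_one.mpr hb0b1
    have hprod : b0 * b1 ∣ a 2 + b1 := hcop01.mul_dvd hb0m (dvd_add hb1m dvd_rfl)
    obtain ⟨t, ht⟩ := hprod
    have ht0 : 0 < t := quot_pos (mul_pos hb0pos hb1pos) (by linarith) ht
    have htev : Even t := by
      apply quot_even hb0odd hb1odd _ ht
      obtain ⟨t2, ht2⟩ := hmodd
      obtain ⟨v, hv⟩ := hb1odd
      exact ⟨t2 + v + 1, by omega⟩
    have ha3 : a 3 = a 2 + b1 - b0 := by linarith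
    have ha4 : a 4 = 2*(a 2) - 2*b0 := by linarith
    refine ⟨t, ht0, Or.inl ⟨b0, b1, hb0pos, by linarith, hb0odd, hb1odd, hb0b1,
      by linarith, by linarith, htev, ?_, ?_, ?_⟩⟩
    · linear_combination ht
    · linear_combination ht + ha3
    · linear_combination 2*ht + ha4
  · -- ODD CASE
    have hqodd : Odd (a 1) := by
      obtain ⟨u, hu⟩ := hodd
      exact ⟨u + (a 3 - a 2), by linarith⟩
    have hg1 : Int.gcd (a 0) (a 1) = 1 := by
      have hdvd : Int.gcd (a 0) (a 1) ∣ 2 := by exact_mod_cast hgdvd2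
      rcases (Nat.prime_two.eq_one_or_self_of_dvd _ hdvd) with hc | hc
      · exact hc
      · exfalso
        rw [hc] at hgl
        push_cast at hgl
        obtain ⟨k, hk⟩ := hgl
        obtain ⟨u, hu⟩ := hodd
        omega
    have hcop : IsCoprime (a 0) (a 1) := Int.isCoprime_iff_gcd_eq_one.mpr hg1
    have HQ' : a 1 ∣ 2*(a 2) ∨ a 1 ∣ 2*(a 2) + a 0 := by
      rcases HQ with h1 | h1
      · exact Or.inl h1
      · right
        have h2 : a 1 ∣ 2*(2*(a 2) - a 3) := h1.mul_left 2
        have he : 2*(a 2) + a 0 = 2*(2*(a 2) - a 3) + a 1 := by linarith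
        rw [he]; exact dvd_add h2 dvd_rfl
    have HP' : a 0 ∣ 2*(a 2) + a 1 ∨ a 0 ∣ (a 2) + a 1 := by
      rcases HP with h1 | h1 | h1 | h1
      · have hd : a 0 ∣ ((Int.gcd (a 0) (a 1) : ℤ)) := Int.dvd_coe_gcd dvd_rfl h1
        rw [hg1] at hd
        push_cast at hd
        exact Or.inl (hd.trans (one_dvd _))
      · left
        have h2 : a 0 ∣ 2*(a 3) := h1.mul_left 2
        have he : 2*(a 2) + a 1 = 2*(a 3) + a 0 := by linarith
        rw [he]; exact dvd_add h2 dvd_rfl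
      · left
        have he : 2*(a 2) + a 1 = 2*(a 3) + a 0 := by linarith
        rw [he]; exact dvd_add h1 dvd_rfl
      · right
        have he : (a 2) + a 1 = (2*(a 3) - a 2) + a 0 := by linarith
        rw [he]; exact dvd_add h1 dvd_rfl
    have hA : 0 < a 0 * a 1 := mul_pos hp (by linarith)
    rcases HQ' with hQ | hQ <;> rcases HP' with hP | hP
    · -- case (ii): q ∣ 2a2, p ∣ 2a2 + a1
      have hD : (a 0)*(a 1) ∣ 2*(a 2) + a 1 := hcop.mul_dvd hP (dvd_add hQ dvd_rfl)
      obtain ⟨t, ht⟩ := hD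
      have ht' : 2*(a 2) + a 1 = (a 0)*(a 1)*t := ht
      have ht0 : 0 < t := quot_pos hA (by linarith) ht'
      have htodd : Odd t := by
        apply quot_odd _ ht'
        obtain ⟨v, hv⟩ := hqodd
        exact ⟨a 2 + v, by linarith⟩
      refine ⟨t, ht0, Or.inr (Or.inl ⟨hodd, hqodd, hg1, htodd, ?_, ?_, ?_⟩)⟩
      · linear_combination ht'
      · linear_combination ht' + h3
      · linear_combination ht' + hr
    · -- case (iii): q ∣ 2a2, p ∣ a2 + a1
      have hq2 : a 1 ∣ a 2 := odd_dvd_two_mul' hqodd hQ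
      have hD : (a 0)*(a 1) ∣ (a 2) + a 1 := hcop.mul_dvd hP (dvd_add hq2 dvd_rfl)
      obtain ⟨t, ht⟩ := hD
      have ht' : (a 2) + a 1 = (a 0)*(a 1)*t := ht
      have ht0 : 0 < t := quot_pos hA (by linarith) ht'
      refine ⟨t, ht0, Or.inr (Or.inr (Or.inl ⟨hodd, hqodd, hg1, ?_, ?_, ?_⟩))⟩
      · linear_combination ht'
      · linear_combination 2*ht' + h3
      · linear_combination 2*ht' + hr
    · -- case (iv): q ∣ 2a2 + a0, p ∣ 2a2 + a1
      have hDp : a 0 ∣ 2*(a 2) + a 0 + a 1 := by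
        have he : 2*(a 2) + a 0 + a 1 = (2*(a 2) + a 1) + a 0 := by ring
        rw [he]; exact dvd_add hP dvd_rfl
      have hDq : a 1 ∣ 2*(a 2) + a 0 + a 1 := by
        have he : 2*(a 2) + a 0 + a 1 = (2*(a 2) + a 0) + a 1 := by ring
        rw [he]; exact dvd_add hQ dvd_rfl
      have hD : (a 0)*(a 1) ∣ 2*(a 2) + a 0 + a 1 := hcop.mul_dvd hDp hDq
      obtain ⟨t, ht⟩ := hD
      have ht' : 2*(a 2) + a 0 + a 1 = (a 0)*(a 1)*t := ht
      have ht0 : 0 < t := quot_pos hA (by linarith) ht'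
      have htev : Even t := by
        apply quot_even hodd hqodd _ ht'
        obtain ⟨u, hu⟩ := hodd
        obtain ⟨v, hv⟩ := hqodd
        exact ⟨a 2 + u + v + 1, by linarith⟩
      obtain ⟨ν, hν⟩ := htev
      have hν0 : 0 < ν := by omega
      have ht'' : 2*(a 2) + a 0 + a 1 = (a 0)*(a 1)*(ν + ν) := by rw [ht', hν]
      refine ⟨ν, hν0, Or.inr (Or.inr (Or.inr (Or.inl ⟨hodd, hqodd, hg1, ?_, ?_, ?_⟩)))⟩
      · linear_combination ht''
      · have h32 : 2*(a 3) = 2*(a 0*(ν*(a 1) - 1)) := by linear_combination ht'' + h3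
        linarith
      · linear_combination ht'' + hr
    · -- case (v): q ∣ 2a2 + a0, p ∣ a2 + a1
      have hDp : a 0 ∣ 2*(a 2) + a 0 + 2*(a 1) := by
        have he : 2*(a 2) + a 0 + 2*(a 1) = 2*((a 2) + a 1) + a 0 := by ring
        rw [he]; exact dvd_add (hP.mul_left 2) dvd_rfl
      have hDq : a 1 ∣ 2*(a 2) + a 0 + 2*(a 1) := by
        have he : 2*(a 2) + a 0 + 2*(a 1) = (2*(a 2) + a 0) + 2*(a 1) := by ring
        rw [he]; exact dvd_add hQ (Dvd.intro 2 (by ring))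
      have hD : (a 0)*(a 1) ∣ 2*(a 2) + a 0 + 2*(a 1) := hcop.mul_dvd hDp hDq
      obtain ⟨t, ht⟩ := hD
      have ht' : 2*(a 2) + a 0 + 2*(a 1) = (a 0)*(a 1)*t := ht
      have ht0 : 0 < t := quot_pos hA (by linarith) ht'
      have htodd : Odd t := by
        apply quot_odd _ ht'
        obtain ⟨u, hu⟩ := hodd
        exact ⟨a 2 + u + a 1, by linarith⟩
      refine ⟨t, ht0, Or.inr (Or.inr (Or.inr (Or.inr ⟨hodd, hqodd, hg1, htodd, ?_, ?_, ?_⟩)))⟩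
      · linear_combination ht'
      · linear_combination ht' + h3
      · linear_combination ht' + hr
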